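/- If C is a finite class of VC dimension 1 (i.e., a (2,3)-class for all pairs and no pair shattered), then RTD(C) ≤ 1. -/
import Mathlib


open Finset

def IsTeachingSet {n : ℕ} (C : Finset (Fin n → Bool)) (c : Fin n → Bool)
    (A : Finset (Fin n)) : Prop :=
  ∀ c' ∈ C, c' ≠ c → ∃ i ∈ A, c' i ≠ c i

noncomputable def TD {n : ℕ} (C : Finset (Fin n → Bool)) (c : Fin n → Bool) : ℕ :=
  sInf {k | ∃ A : Finset (Fin n), A.card = k ∧ IsTeachingSet C c A}

noncomputable def TDmin {n : ℕ} (C : Finset (Fin n → Bool)) : ℕ :=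
  sInf {k | ∃ c ∈ C, TD C c = k}

noncomputable def patterns {n : ℕ} (C : Finset (Fin n → Bool)) (A : Finset (Fin n)) :
    Finset (A → Bool) :=
  @Finset.image _ _ (Classical.decEq _) (fun c (i : A) => c i.1) C

def IsXYClass {n : ℕ} (C : Finset (Fin n → Bool)) (a b : ℕ) : Prop :=
  ∀ A : Finset (Fin n), A.card ≤ a → (patterns C A).card ≤ b

def Shatters {n : ℕ} (C : Finset (Fin n → Bool)) (A : Finset (Fin n)) : Prop :=
  ∀ f : A → Bool, ∃ c ∈ C, ∀ i : A, c i.1 = f i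

noncomputable def VCD {n : ℕ} (C : Finset (Fin n → Bool)) : ℕ :=
  sSup {k | ∃ A : Finset (Fin n), A.card = k ∧ Shatters C A}

noncomputable def eraseMin {n : ℕ} (C : Finset (Fin n → Bool)) : Finset (Fin n → Bool) :=
  @Finset.filter _ (fun c => TD C c ≠ TDmin C) (Classical.decPred _) C

noncomputable def RTD {n : ℕ} (C : Finset (Fin n → Bool)) : ℕ :=
  sSup (Set.range fun t => TDmin (eraseMin^[t] C))

noncomputable def fDim (a b : ℕ) : ℕ∞ :=
  sSup {m : ℕ∞ | ∃ (n : ℕ) (C : Finset (Fin n → Bool)),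
    C.Nonempty ∧ IsXYClass C a b ∧ (TDmin C : ℕ∞) = m}

noncomputable def consistClass {n : ℕ} (C : Finset (Fin n → Bool)) (Y : Finset (Fin n))
    (b : Fin n → Bool) : Finset (Fin n → Bool) :=
  @Finset.filter _ (fun c => ∀ i ∈ Y, c i = b i) (Classical.decPred _) C

noncomputable def prodClass {n1 n2 : ℕ} (C1 : Finset (Fin n1 → Bool))
    (C2 : Finset (Fin n2 → Bool)) : Finset (Fin (n1 + n2) → Bool) :=
  @Finset.filter _
    (fun c => (fun i => c (Fin.castAdd n2 i)) ∈ C1 ∧ (fun j => c (Fin.natAdd n1 j)) ∈ C2)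
    (Classical.decPred _) Finset.univ

lemma bool_tri : ∀ x y z : Bool, x ≠ y → z = x ∨ z = y := by decide

lemma TDmin_le_TD {n : ℕ} {C : Finset (Fin n → Bool)} {c : Fin n → Bool}
    (hc : c ∈ C) : TDmin C ≤ TD C c :=
  Nat.sInf_le ⟨c, hc, rfl⟩

lemma TD_le_card {n : ℕ} {C : Finset (Fin n → Bool)} {c : Fin n → Bool}
    {A : Finset (Fin n)} (h : IsTeachingSet C c A) : TD C c ≤ A.card :=
  Nat.sInf_le ⟨A, rfl, h⟩

lemma key {n : ℕ} (D : Finset (Fin n → Bool))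
    (hsh : ∀ A : Finset (Fin n), A.card = 2 → ¬ Shatters D A) :
    TDmin D ≤ 1 := by
  rcases D.eq_empty_or_nonempty with h | ⟨c0, hc0⟩
  · subst h
    have he : {k | ∃ c ∈ (∅ : Finset (Fin n → Bool)), TD ∅ c = k} = ∅ := by simp
    rw [TDmin, he, Nat.sInf_empty]; omega
  by_cases hone : ∀ c' ∈ D, c' = c0
  · have h0 : TD D c0 ≤ 0 := by
      have : IsTeachingSet D c0 ∅ := fun c' hc' hne => absurd (hone c' hc') hne
      simpa using TD_le_card this
    exact le_trans (TDmin_le_TD hc0) (by omega)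
  push_neg at hone
  obtain ⟨c1, hc1, hne⟩ := hone
  set S : Fin n → Bool → Finset (Fin n → Bool) :=
    fun i v => @Finset.filter _ (fun c => c i = v) (Classical.decPred _) D with hSdef
  have hmemS : ∀ i v c, c ∈ S i v ↔ c ∈ D ∧ c i = v := by
    intro i v c; simp [hSdef, Finset.mem_filter]
  obtain ⟨i0, hi0⟩ : ∃ i, c1 i ≠ c0 i := Function.ne_iff.mp hne
  set P : Set ℕ := {k | ∃ i v, (S i v).card = k ∧ 0 < k ∧ k < D.card} with hPdef
  have hPne : P.Nonempty := by
    refine ⟨(S i0 (c1 i0)).card, i0, c1 i0, rfl, ?_, ?_⟩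
    · exact Finset.card_pos.mpr ⟨c1, (hmemS _ _ _).mpr ⟨hc1, rfl⟩⟩
    · refine Finset.card_lt_card ⟨fun d hd => ((hmemS _ _ _).mp hd).1, fun hsub => ?_⟩
      exact hi0 (((hmemS _ _ _).mp (hsub hc0)).2).symm
  obtain ⟨i, v, hScard, hSpos, hSlt⟩ := Nat.sInf_mem hPne
  have hcard1 : (S i v).card = 1 := by
    rcases Nat.lt_or_ge (S i v).card 2 with h2 | h2
    · omega
    obtain ⟨a, ha, b, hb, hab⟩ := Finset.one_lt_card.mp h2
    obtain ⟨j, hj⟩ : ∃ j, a j ≠ b j := Function.ne_iff.mp hab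
    obtain ⟨haD, hai⟩ := (hmemS _ _ _).mp ha
    obtain ⟨hbD, hbi⟩ := (hmemS _ _ _).mp hb
    have hij : i ≠ j := fun h => hj (by rw [← h, hai, hbi])
    have hA : ({i, j} : Finset (Fin n)).card = 2 := Finset.card_pair hij
    have hns := hsh {i, j} hA
    rw [_root_.Shatters] at hns
    push_neg at hns
    obtain ⟨f, hf⟩ := hns
    have hiA : i ∈ ({i,j} : Finset (Fin n)) := by simp
    have hjA : j ∈ ({i,j} : Finset (Fin n)) := by simp
    set fi := f ⟨i, hiA⟩ with hfidef
    set fj := f ⟨j, hjA⟩ with hfjdef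
    have hmiss : ∀ d ∈ D, d i = fi → d j = fj → False := by
      intro d hd hdi hdj
      obtain ⟨x, hx⟩ := hf d hd
      rcases Finset.mem_insert.mp x.2 with h | h
      · have hxeq : x = ⟨i, hiA⟩ := Subtype.ext h
        exact hx (by rw [hxeq]; exact hdi)
      · have hxeq : x = ⟨j, hjA⟩ := Subtype.ext (Finset.mem_singleton.mp h)
        exact hx (by rw [hxeq]; exact hdj)
    by_cases hfi : fi = v
    · rcases bool_tri (a j) (b j) fj hj with h | h
      · exact (hmiss a haD (by rw [hai, hfi]) h.symm).elim
      · exact (hmiss b hbD (by rw [hbi, hfi]) h.symm).elim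
    · have hsub : ∀ d ∈ S j fj, d ∈ S i v := by
        intro d hd
        obtain ⟨hdD, hdj⟩ := (hmemS _ _ _).mp hd
        refine (hmemS _ _ _).mpr ⟨hdD, ?_⟩
        rcases bool_tri v fi (d i) (fun hh => hfi hh.symm) with h' | h'
        · exact h'
        · exact absurd (hmiss d hdD h' hdj) (by simp)
      rcases bool_tri (a j) (b j) fj hj with h | h
      · -- fj = a j : b excluded from S j fj
        have hbnot : b ∉ S j fj := by
          intro hh
          exact hj (h.symm.trans ((hmemS _ _ _).mp hh).2.symm)
        have haS : a ∈ S j fj := (hmemS _ _ _).mpr ⟨haD, h.symm⟩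
        have hlt2 : (S j fj).card < (S i v).card :=
          Finset.card_lt_card ⟨fun d hd => hsub d hd, fun hss => hbnot (hss hb)⟩
        have hmem : (S j fj).card ∈ P :=
          ⟨j, fj, rfl, Finset.card_pos.mpr ⟨a, haS⟩, by omega⟩
        have := Nat.sInf_le hmem
        omega
      · have hanot : a ∉ S j fj := by
          intro hh
          exact hj (by rw [((hmemS _ _ _).mp hh).2, h])
        have hbS : b ∈ S j fj := (hmemS _ _ _).mpr ⟨hbD, h.symm⟩
        have hlt2 : (S j fj).card < (S i v).card :=
          Finset.card_lt_card ⟨fun d hd => hsub d hd, fun hss => hanot (hss ha)⟩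
        have hmem : (S j fj).card ∈ P :=
          ⟨j, fj, rfl, Finset.card_pos.mpr ⟨b, hbS⟩, by omega⟩
        have := Nat.sInf_le hmem
        omega
  obtain ⟨c, hc⟩ := Finset.card_eq_one.mp hcard1
  have hcS : c ∈ S i v := by rw [hc]; exact Finset.mem_singleton_self c
  obtain ⟨hcD, hci⟩ := (hmemS _ _ _).mp hcS
  have hts : IsTeachingSet D c {i} := by
    intro c' hc' hne'
    refine ⟨i, Finset.mem_singleton_self i, fun heq => hne' ?_⟩
    have : c' ∈ S i v := (hmemS _ _ _).mpr ⟨hc', by rw [heq, hci]⟩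
    rw [hc] at this
    exact Finset.mem_singleton.mp this
  have h1 : TD D c ≤ 1 := by simpa using TD_le_card hts
  exact le_trans (TDmin_le_TD hcD) h1

theorem stmt15 (n : ℕ) (C : Finset (Fin n → Bool)) (hC : VCD C ≤ 1) :
    RTD C ≤ 1 := by
  have hiter : ∀ t, eraseMin^[t] C ⊆ C := by
    intro t
    induction t with
    | zero => simp
    | succ t ih =>
      rw [Function.iterate_succ_apply']
      exact fun x hx => ih ((@Finset.mem_filter _ _ (Classical.decPred _) _ x).mp hx).1
  have hsh : ∀ (D : Finset (Fin n → Bool)), D ⊆ C →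
      ∀ A : Finset (Fin n), A.card = 2 → ¬ Shatters D A := by
    intro D hD A hA hshat
    have hCshat : Shatters C A := by
      intro f
      obtain ⟨c, hc, h⟩ := hshat f
      exact ⟨c, hD hc, h⟩
    have hbdd : BddAbove {k | ∃ A : Finset (Fin n), A.card = k ∧ Shatters C A} := by
      refine ⟨n, ?_⟩
      rintro k ⟨A', hA', -⟩
      calc k = A'.card := hA'.symm
        _ ≤ (Finset.univ : Finset (Fin n)).card := Finset.card_le_card (Finset.subset_univ A')
        _ = n := by simp
    have h2 : 2 ≤ VCD C := le_csSup hbdd ⟨A, hA, hCshat⟩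
    omega
  refine csSup_le ⟨TDmin C, 0, rfl⟩ ?_
  rintro k ⟨t, rfl⟩
  exact key _ (hsh _ (hiter t))
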